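/- For every integer m ≥ 1 and every integer i with f_m + 1 ≤ i ≤ f_{m+1} + 1, let w = K_{m+1}[i, f_{m+1}] · K_m · K_{m+1}[1, i − f_m − 1], a word of length f_{m+1}. Then ww = K_{m+5}[f_{m+2}+i, f_{m+3}+f_{m+1}+i−1]; in particular, since every kernel word K_m is a factor of the Fibonacci word F, the square ww is a factor of F. -/

import Mathlib

/-- Fibonacci numbers: `fn 0 = 1`, `fn 1 = 2`, `fn (m+2) = fn (m+1) + fn m`
(so `fn m` is the paper's `f_m`; also `f_{m-1} = Nat.fib (m+1)` etc.). -/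
def fn (m : ℕ) : ℕ := Nat.fib (m + 2)

/-- Finite Fibonacci words `Fw m = σ^m(a)` for the morphism σ(a)=ab, σ(b)=a,
with `a := false`, `b := true`; equivalently `Fw (m+2) = Fw (m+1) ++ Fw m`. -/
def Fw : ℕ → List Bool
  | 0 => [false]
  | 1 => [false, true]
  | m + 2 => Fw (m + 1) ++ Fw m

/-- The infinite Fibonacci word (0-indexed): the fixed point of σ beginning with `a`. -/
def fibWord (i : ℕ) : Bool := (Fw (i + 1)).getD i false

/-- `fFactor i n = F[i;n]`, the factor of length `n` of the Fibonacci word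
beginning at (1-indexed) position `i`. -/
def fFactor (i n : ℕ) : List Bool := (List.range n).map fun t => fibWord (i - 1 + t)

/-- `w` occurs as a factor of the infinite Fibonacci word. -/
def IsFactorF (w : List Bool) : Prop := ∃ i : ℕ, 1 ≤ i ∧ w = fFactor i w.length

/-- `D2 i n`: the number of distinct squares occurring as factors of `F[i;n]`. -/
noncomputable def D2 (i n : ℕ) : ℕ :=
  {w : List Bool | w ≠ [] ∧ (w ++ w) <:+: fFactor i n}.ncard

/-- The kernel word `K_m` (`m ≥ 0`): the last letter of `F_{m+1}` followed by
`F_m` with its last letter removed. -/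
def kerW (m : ℕ) : List Bool := (Fw (m + 1)).getLast! :: (Fw m).dropLast

/-- `sliceF u i j = u[i,j]`, the (1-indexed) factor of `u` from position `i` to `j`,
with `u[i,i-1] = ε`. -/
def sliceF (u : List Bool) (i j : ℕ) : List Bool := (u.drop (i - 1)).take (j + 1 - i)

lemma fn_add_two (k : ℕ) : fn (k + 2) = fn (k + 1) + fn k := by
  show Nat.fib (k + 2 + 2) = _
  rw [Nat.fib_add_two]; show _ = Nat.fib (k + 1 + 2) + Nat.fib (k + 2)
  rw [show k + 1 + 2 = k + 2 + 1 from rfl, Nat.add_comm]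

lemma fn_pos (k : ℕ) : 1 ≤ fn k := Nat.fib_pos.2 (by omega)

lemma fn_le_succ (k : ℕ) : fn k ≤ fn (k + 1) := by
  cases k with
  | zero => decide
  | succ p => rw [fn_add_two]; have := fn_pos p; omega

lemma lt_fn (k : ℕ) : k < fn k := by
  induction k with
  | zero => decide
  | succ n ih =>
    rcases n with _ | p
    · decide
    · rw [fn_add_two]; have := fn_pos p; omega

lemma Fw_length (k : ℕ) : (Fw k).length = fn k := by
  induction k using Nat.strong_induction_on with
  | _ k ih =>
    match k with
    | 0 => rfl
    | 1 => rfl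
    | (n+2) =>
      simp [Fw, ih (n+1) (by omega), ih n (by omega), fn_add_two]

lemma Fw_prefix_succ (k : ℕ) : Fw k <+: Fw (k + 1) := by
  match k with
  | 0 => exact ⟨[true], rfl⟩
  | (n+1) => exact ⟨Fw n, rfl⟩

lemma Fw_prefix {k n : ℕ} (h : k ≤ n) : Fw k <+: Fw n := by
  induction n with
  | zero => cases Nat.le_zero.mp h; exact List.prefix_refl _
  | succ n ih =>
    rcases Nat.lt_or_ge k (n+1) with h' | h'
    · exact (ih (by omega)).trans (Fw_prefix_succ n)
    · obtain rfl : k = n + 1 := by omega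
      exact List.prefix_refl _

lemma fibWord_eq (k j : ℕ) (h : j < fn k) :
    fibWord j = (Fw k)[j]'(by rw [Fw_length]; exact h) := by
  have hj : j < (Fw (j+1)).length := by
    rw [Fw_length]; exact (lt_fn j).trans_le (fn_le_succ j)
  rcases Nat.le_total (j+1) k with hk | hk
  · rw [show fibWord j = (Fw (j+1)).getD j false from rfl, List.getD_eq_getElem _ _ hj]
    exact (Fw_prefix hk).getElem hj
  · rw [show fibWord j = (Fw (j+1)).getD j false from rfl, List.getD_eq_getElem _ _ hj]
    exact ((Fw_prefix hk).getElem _).symm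

/-- auxiliary: 0-indexed factor of the Fibonacci word starting at `p`, length `n`. -/
def g (p n : ℕ) : List Bool := (List.range n).map fun t => fibWord (p + t)

@[simp] lemma g_length (p n : ℕ) : (g p n).length = n := by simp [g]

lemma g_append (p a b : ℕ) : g p (a + b) = g p a ++ g (p + a) b := by
  apply List.ext_getElem
  · simp [g]
  · intro t h1 h2
    simp only [g, List.getElem_map, List.getElem_range]
    simp only [List.length_append, g_length] at h2
    rcases Nat.lt_or_ge t a with h | h
    · rw [List.getElem_append_left (by simpa [g] using h)]
      simp [g]
    · rw [List.getElem_append_right (by simpa [g] using h)]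
      simp only [g, List.getElem_map, List.getElem_range, g_length, List.length_map, List.length_range]
      congr 1
      omega

lemma g_congr {p q n : ℕ} (h : ∀ t < n, fibWord (p + t) = fibWord (q + t)) :
    g p n = g q n := by
  apply List.map_congr_left; intro t ht; exact h t (List.mem_range.mp ht)

/-- `P`: copy of `F_k` after the prefix `F_{k+1}`. -/
lemma fibWord_shift (k u : ℕ) (hu : u < fn k) : fibWord (fn (k + 1) + u) = fibWord u := by
  have h1 : fn (k + 1) + u < fn (k + 2) := by rw [fn_add_two]; omega
  rw [fibWord_eq (k + 2) _ h1, fibWord_eq k u hu]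
  have hlen : (Fw (k+1)).length ≤ fn (k+1) + u := by rw [Fw_length]; omega
  show (Fw (k + 1) ++ Fw k)[fn (k + 1) + u]'(by rw [List.length_append, Fw_length, Fw_length]; rw [fn_add_two] at h1; omega) = _
  rw [List.getElem_append_right hlen]
  congr 1
  rw [Fw_length]; omega

lemma P' (k x u : ℕ) (hu : u < fn k) (hx : x = fn (k + 1) + u) : fibWord x = fibWord u := by
  subst hx; exact fibWord_shift k u hu

/-- `L`: period `fn k` on the prefix of length `fn (k+2) - 2`. -/
lemma fibWord_period (k : ℕ) : ∀ u, u + 3 ≤ fn (k + 1) → fibWord (fn k + u) = fibWord u := by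
  induction k with
  | zero => intro u hu; have : fn (0+1) = 2 := rfl; omega
  | succ k ih =>
    intro u hu
    rw [show k + 1 + 1 = k + 2 from rfl] at hu
    have h2 := fn_add_two k
    rcases Nat.lt_or_ge u (fn k) with h | h
    · exact P' k (fn (k+1) + u) u h rfl
    · obtain ⟨v, rfl⟩ : ∃ v, u = fn k + v := ⟨u - fn k, by omega⟩
      have hv : v + 3 ≤ fn (k + 1) := by omega
      have e1 : fibWord (fn (k + 1) + (fn k + v)) = fibWord v := by
        apply P' (k + 1) _ v (by omega)
        rw [fn_add_two]; ring
      rw [e1, ih v hv]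

lemma L' (k x u : ℕ) (hu : u + 3 ≤ fn (k + 1)) (hx : x = fn k + u) : fibWord x = fibWord u := by
  subst hx; exact fibWord_period k u hu


lemma fFactor_eq_g (i n : ℕ) : fFactor i n = g (i - 1) n := rfl

lemma Fw_ne_nil (k : ℕ) : Fw k ≠ [] := by
  have hl := Fw_length k; have hp := fn_pos k
  intro h; rw [h] at hl; simp at hl; omega

lemma kerW_eq (k : ℕ) : kerW k = g (fn (k + 1) - 1) (fn k) := by
  have hk1 := fn_pos k
  have hk2 := fn_pos (k + 1)
  have hrec := fn_add_two k
  apply List.ext_getElem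
  · simp [kerW, g, Fw_length]; omega
  · intro t h1 h2
    simp only [g_length] at h2
    have hidx : fn (k + 1) - 1 + t < fn (k + 2) := by omega
    simp only [g, List.getElem_map, List.getElem_range]
    rw [fibWord_eq (k + 2) _ hidx]
    show (kerW k)[t]'h1 = (Fw (k + 1) ++ Fw k)[fn (k + 1) - 1 + t]'(by rw [List.length_append, Fw_length, Fw_length]; omega)
    rcases t with _ | s
    · rw [List.getElem_append_left (by rw [Fw_length]; omega)]
      show (Fw (k+1)).getLast! = _
      rw [List.getLast!_of_getLast? (List.getLast?_eq_getLast (Fw_ne_nil (k+1)))]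
      rw [List.getLast_eq_getElem]
      congr 1
      rw [Fw_length]; omega
    · rw [List.getElem_append_right (by rw [Fw_length]; omega)]
      show (Fw k).dropLast[s]'_ = _
      rw [List.getElem_dropLast]
      congr 1
      rw [Fw_length]; omega

lemma slice_g (p n a b : ℕ) (h1 : 1 ≤ a) (h2 : a ≤ b + 1) (h3 : b ≤ n) :
    sliceF (g p n) a b = g (p + a - 1) (b + 1 - a) := by
  apply List.ext_getElem
  · simp [sliceF, g]; omega
  · intro t ht1 ht2
    simp only [g_length] at ht2
    simp only [sliceF, g, List.getElem_take, List.getElem_drop, List.getElem_map,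
      List.getElem_range]
    congr 1
    omega


section Pieces
variable {n A B c d : ℕ}

lemma ctx_e (hA : fn n = A + 1) (hB : fn (n+1) = B + 2) :
    fn (n+2) = A + B + 3 ∧ fn (n+3) = A + 2*B + 5 ∧ fn (n+4) = 2*A + 3*B + 8 ∧
    fn (n+5) = 3*A + 5*B + 13 ∧ fn (n+6) = 5*A + 8*B + 21 ∧
    fn (n+7) = 8*A + 13*B + 34 := by
  have r0 : fn (n+2) = fn (n+1) + fn n := fn_add_two n
  have r1 : fn (n+3) = fn (n+2) + fn (n+1) := fn_add_two (n+1)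
  have r2 : fn (n+4) = fn (n+3) + fn (n+2) := fn_add_two (n+2)
  have r3 : fn (n+5) = fn (n+4) + fn (n+3) := fn_add_two (n+3)
  have r4 : fn (n+6) = fn (n+5) + fn (n+4) := fn_add_two (n+4)
  have r5 : fn (n+7) = fn (n+6) + fn (n+5) := fn_add_two (n+5)
  omega

lemma piece1 (hA : fn n = A + 1) (hB : fn (n+1) = B + 2) (hd : A + 1 = c + d) :
    sliceF (kerW (n+2)) (fn (n+1) + 1 + c) (fn (n+2)) = g (A + 3*B + 6 + c) d := by
  obtain ⟨e2, e3, e4, e5, e6, e7⟩ := ctx_e hA hB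
  have b3 : fn (n+2+1) = A + 2*B + 5 := e3
  rw [kerW_eq, slice_g _ _ _ _ (by omega) (by omega) (by omega)]
  congr 1 <;> omega

lemma piece2 (hA : fn n = A + 1) (hB : fn (n+1) = B + 2) :
    kerW (n+1) = g (A + B + 2) (fn (n+1)) := by
  obtain ⟨e2, e3, e4, e5, e6, e7⟩ := ctx_e hA hB
  have b2 : fn (n+1+1) = A + B + 3 := e2
  rw [kerW_eq]; congr 1; omega

lemma piece3 (hA : fn n = A + 1) (hB : fn (n+1) = B + 2) (hc : c ≤ A + 1) :
    sliceF (kerW (n+2)) 1 (fn (n+1) + 1 + c - fn (n+1) - 1) = g (A + 2*B + 4) c := by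
  obtain ⟨e2, e3, e4, e5, e6, e7⟩ := ctx_e hA hB
  have b3 : fn (n+2+1) = A + 2*B + 5 := e3
  rw [kerW_eq, slice_g _ _ _ _ (by omega) (by omega) (by omega)]
  congr 1 <;> omega

lemma piece4 (hA : fn n = A + 1) (hB : fn (n+1) = B + 2) (hc : c ≤ A + 1) :
    sliceF (kerW (n+6)) (fn (n+3) + (fn (n+1) + 1 + c))
      (fn (n+4) + fn (n+2) + (fn (n+1) + 1 + c) - 1)
      = g (9*A + 16*B + 40 + c) (2 * fn (n+2)) := by
  obtain ⟨e2, e3, e4, e5, e6, e7⟩ := ctx_e hA hB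
  have b7 : fn (n+6+1) = 8*A + 13*B + 34 := e7
  rw [kerW_eq, slice_g _ _ _ _ (by omega) (by omega) (by omega)]
  congr 1 <;> omega

lemma pieceE1 (hA : fn n = A + 1) (hB : fn (n+1) = B + 2) (hd : A + 1 = c + d) :
    g (9*A + 16*B + 40 + c) d = g (A + 3*B + 6 + c) d := by
  obtain ⟨e2, e3, e4, e5, e6, e7⟩ := ctx_e hA hB
  have b7 : fn (n+6+1) = 8*A + 13*B + 34 := e7
  apply g_congr; intro t ht
  exact P' (n+6) _ (A + 3*B + 6 + c + t) (by omega) (by omega)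

lemma pieceE2 (hA : fn n = A + 1) (hB : fn (n+1) = B + 2) (hd : A + 1 = c + d) :
    g (9*A + 16*B + 40 + c + d) (fn (n+1)) = g (A + B + 2) (fn (n+1)) := by
  obtain ⟨e2, e3, e4, e5, e6, e7⟩ := ctx_e hA hB
  have b7 : fn (n+6+1) = 8*A + 13*B + 34 := e7
  have b4 : fn (n+3+1) = 2*A + 3*B + 8 := e4
  apply g_congr; intro t ht
  have a1 : fibWord (9*A + 16*B + 40 + c + d + t) = fibWord (2*A + 3*B + 7 + t) :=
    P' (n+6) _ _ (by omega) (by omega)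
  have a2 : fibWord (2*A + 3*B + 7 + t) = fibWord (A + B + 2 + t) :=
    L' (n+3) _ _ (by omega) (by omega)
  rw [a1, a2]

lemma pieceE3 (hA : fn n = A + 1) (hB : fn (n+1) = B + 2) (hd : A + 1 = c + d) :
    g (9*A + 16*B + 40 + c + d + fn (n+1)) c = g (A + 2*B + 4) c := by
  obtain ⟨e2, e3, e4, e5, e6, e7⟩ := ctx_e hA hB
  have b7 : fn (n+6+1) = 8*A + 13*B + 34 := e7
  have b4 : fn (n+3+1) = 2*A + 3*B + 8 := e4
  apply g_congr; intro t ht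
  have a1 : fibWord (9*A + 16*B + 40 + c + d + fn (n+1) + t)
      = fibWord (2*A + 4*B + 9 + t) := P' (n+6) _ _ (by omega) (by omega)
  have a2 : fibWord (2*A + 4*B + 9 + t) = fibWord (A + 2*B + 4 + t) :=
    L' (n+3) _ _ (by omega) (by omega)
  rw [a1, a2]

lemma pieceE4 (hA : fn n = A + 1) (hB : fn (n+1) = B + 2) (hd : A + 1 = c + d) :
    g (9*A + 16*B + 40 + c + d + fn (n+1) + c) d = g (A + 3*B + 6 + c) d := by
  obtain ⟨e2, e3, e4, e5, e6, e7⟩ := ctx_e hA hB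
  have b7 : fn (n+6+1) = 8*A + 13*B + 34 := e7
  have b4 : fn (n+3+1) = 2*A + 3*B + 8 := e4
  have b3 : fn (n+2+1) = A + 2*B + 5 := e3
  apply g_congr; intro t ht
  have a1 : fibWord (9*A + 16*B + 40 + c + d + fn (n+1) + c + t)
      = fibWord (2*A + 4*B + 9 + c + t) := P' (n+6) _ _ (by omega) (by omega)
  have a2 : fibWord (2*A + 4*B + 9 + c + t) = fibWord (B + 1 + c + t) :=
    P' (n+3) _ _ (by omega) (by omega)
  have a3 : fibWord (A + 3*B + 6 + c + t) = fibWord (B + 1 + c + t) :=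
    P' (n+2) _ _ (by omega) (by omega)
  rw [a1, a2, a3]

lemma pieceE5 (hA : fn n = A + 1) (hB : fn (n+1) = B + 2) (hd : A + 1 = c + d) :
    g (9*A + 16*B + 40 + c + d + fn (n+1) + c + d) (fn (n+1))
      = g (A + B + 2) (fn (n+1)) := by
  obtain ⟨e2, e3, e4, e5, e6, e7⟩ := ctx_e hA hB
  have b7 : fn (n+6+1) = 8*A + 13*B + 34 := e7
  have b4 : fn (n+3+1) = 2*A + 3*B + 8 := e4
  apply g_congr; intro t ht
  have a1 : fibWord (9*A + 16*B + 40 + c + d + fn (n+1) + c + d + t)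
      = fibWord (3*A + 4*B + 10 + t) := P' (n+6) _ _ (by omega) (by omega)
  have a2 : fibWord (3*A + 4*B + 10 + t) = fibWord (A + B + 2 + t) :=
    P' (n+3) _ _ (by omega) (by omega)
  rw [a1, a2]

lemma pieceE6 (hA : fn n = A + 1) (hB : fn (n+1) = B + 2) (hd : A + 1 = c + d) :
    g (9*A + 16*B + 40 + c + d + fn (n+1) + c + d + fn (n+1)) c
      = g (A + 2*B + 4) c := by
  obtain ⟨e2, e3, e4, e5, e6, e7⟩ := ctx_e hA hB
  have b7 : fn (n+6+1) = 8*A + 13*B + 34 := e7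
  have b5 : fn (n+4+1) = 3*A + 5*B + 13 := e5
  apply g_congr; intro t ht
  have a1 : fibWord (9*A + 16*B + 40 + c + d + fn (n+1) + c + d + fn (n+1) + t)
      = fibWord (3*A + 5*B + 12 + t) := P' (n+6) _ _ (by omega) (by omega)
  have a2 : fibWord (3*A + 5*B + 12 + t) = fibWord (A + 2*B + 4 + t) :=
    L' (n+4) _ _ (by omega) (by omega)
  rw [a1, a2]

lemma key_split (hA : fn n = A + 1) (hB : fn (n+1) = B + 2) (hd : A + 1 = c + d) :
    g (9*A + 16*B + 40 + c) (2 * fn (n+2))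
      = g (A + 3*B + 6 + c) d ++ (g (A + B + 2) (fn (n+1)) ++
        (g (A + 2*B + 4) c ++ (g (A + 3*B + 6 + c) d ++
          (g (A + B + 2) (fn (n+1)) ++ g (A + 2*B + 4) c)))) := by
  obtain ⟨e2, e3, e4, e5, e6, e7⟩ := ctx_e hA hB
  rw [show 2 * fn (n+2) = d + (fn (n+1) + (c + (d + (fn (n+1) + c)))) by omega]
  rw [g_append, g_append, g_append, g_append, g_append]
  rw [pieceE1 hA hB hd, pieceE2 hA hB hd, pieceE3 hA hB hd, pieceE4 hA hB hd,
    pieceE5 hA hB hd, pieceE6 hA hB hd]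

end Pieces


set_option maxHeartbeats 1000000 in
/-- Case 2 squares: for `m ≥ 1` and `f_m + 1 ≤ i ≤ f_{m+1} + 1`, the word
`w = K_{m+1}[i,f_{m+1}] · K_m · K_{m+1}[1,i-f_m-1]` has length `f_{m+1}`, and
`ww = K_{m+5}[f_{m+2}+i, f_{m+3}+f_{m+1}+i-1]`; in particular `ww` is a factor of `F`. -/
theorem square_case_two (m i : ℕ) (hm : 1 ≤ m)
    (h2 : fn m + 1 ≤ i) (hi : i ≤ fn (m + 1) + 1)
    (w : List Bool)
    (hw : w = sliceF (kerW (m + 1)) i (fn (m + 1)) ++ kerW m ++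
        sliceF (kerW (m + 1)) 1 (i - fn m - 1)) :
    w.length = fn (m + 1) ∧
    w ++ w = sliceF (kerW (m + 5)) (fn (m + 2) + i) (fn (m + 3) + fn (m + 1) + i - 1) ∧
    IsFactorF (w ++ w) := by
  obtain ⟨n, rfl⟩ : ∃ n, m = n + 1 := ⟨m - 1, by omega⟩
  subst hw
  simp only [show n+1+1 = n+2 from rfl, show n+1+2 = n+3 from rfl,
    show n+1+3 = n+4 from rfl, show n+1+5 = n+6 from rfl] at h2 hi ⊢
  have r0 : fn (n+2) = fn (n+1) + fn n := fn_add_two n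
  obtain ⟨A, hA⟩ : ∃ A, fn n = A + 1 := ⟨fn n - 1, by have := fn_pos n; omega⟩
  obtain ⟨B, hB⟩ : ∃ B, fn (n+1) = B + 2 := ⟨fn (n+1) - 2, by have := lt_fn (n+1); omega⟩
  obtain ⟨c, rfl⟩ : ∃ c, i = fn (n+1) + 1 + c := ⟨i - fn (n+1) - 1, by omega⟩
  obtain ⟨d, hd⟩ : ∃ d, A + 1 = c + d := ⟨A + 1 - c, by omega⟩
  have key : (sliceF (kerW (n+2)) (fn (n+1) + 1 + c) (fn (n+2)) ++ kerW (n+1) ++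
        sliceF (kerW (n+2)) 1 (fn (n+1) + 1 + c - fn (n+1) - 1)) ++
      (sliceF (kerW (n+2)) (fn (n+1) + 1 + c) (fn (n+2)) ++ kerW (n+1) ++
        sliceF (kerW (n+2)) 1 (fn (n+1) + 1 + c - fn (n+1) - 1))
      = g (9*A + 16*B + 40 + c) (2 * fn (n+2)) := by
    rw [piece1 hA hB hd, piece2 hA hB, piece3 hA hB (by omega),
      key_split hA hB hd]
    simp [List.append_assoc]
  refine ⟨?_, ?_, ?_⟩
  · rw [piece1 hA hB hd, piece2 hA hB, piece3 hA hB (by omega)]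
    simp only [List.length_append, g_length]
    omega
  · rw [key, piece4 hA hB (by omega)]
  · refine ⟨9*A + 16*B + 40 + c + 1, by omega, ?_⟩
    rw [key, fFactor_eq_g, Nat.add_sub_cancel]
    simp only [g_length]
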